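/- arXiv:2207.02355 — 3 statements merged into one kernel-verified Lean document; each statement's English description precedes it below -/
import Mathlib

section
/- Soundness of the atomic-command rule: if ⟦c⟧(p) ⊆ q, then safe^k_{{q}, inter(p,c)}(c, p, q) holds for every k ∈ ℕ. -/
open Classical

/-- A separation algebra: a partial commutative monoid with a set of units.
The partial binary operation is modeled as an `Option`-valued function;
`op a b = some c` means the composition is defined and equals `c`. -/
structure SepAlg (α : Type) : Type where
  op : α → α → Option α
  emp : Set α
  comm : ∀ a b : α, op a b = op b a
  assoc : ∀ a b c : α,
    (op a b).bind (fun x => op x c) = (op b c).bind (fun y => op a y)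
  unit_exists : ∀ a : α, ∃ u ∈ emp, op a u = some a
  unit_undef : ∀ u u' : α, u ∈ emp → u' ∈ emp → u ≠ u' → op u u' = none

/-- Separating conjunction of predicates. -/
def SepAlg.sepConj {α : Type} (A : SepAlg α) (p q : Set α) : Set α :=
  { s | ∃ a ∈ p, ∃ b ∈ q, A.op a b = some s }

/-- Separating implication of predicates: `p -* q = { s | {s} * p ⊆ q }`. -/
def SepAlg.sepImp {α : Type} (A : SepAlg α) (p q : Set α) : Set α :=
  { s | ∀ a ∈ p, ∀ t : α, A.op s a = some t → t ∈ q }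

/-- Lifting of a command semantics to predicates (post-image). -/
def postP {β : Type} (f : β → Set β) (p : Set β) : Set β :=
  { t | ∃ s ∈ p, t ∈ f s }

/-- Locality of a command semantics with respect to a separation algebra. -/
def IsLocalCmd {α : Type} (A : SepAlg α) (f : α → Set α) : Prop :=
  ∀ p q o : Set α, postP f p ⊆ q → postP f (A.sepConj p o) ⊆ A.sepConj q o

/-- Weakest precondition. -/
def wpre {α : Type} (f : α → Set α) (q : Set α) : Set α := { s | f s ⊆ q }

/-- The future predicate `⟨p⟩ c ⟨q⟩ := p -* wp(c)(q)`. -/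
def fut {α : Type} (A : SepAlg α) (f : α → Set α) (p q : Set α) : Set α :=
  A.sepImp p (wpre f q)

/-- Statements of the while-language. -/
inductive Stmt (C : Type) : Type where
  | com : C → Stmt C
  | choice : Stmt C → Stmt C → Stmt C
  | seq : Stmt C → Stmt C → Stmt C
  | loop : Stmt C → Stmt C

/-- The control-flow relation `S →^c S'`. -/
inductive CtrlStep {C : Type} (skipc : C) : Stmt C → C → Stmt C → Prop where
  | com (c : C) : CtrlStep skipc (Stmt.com c) c (Stmt.com skipc)
  | seqSkip (S : Stmt C) : CtrlStep skipc (Stmt.seq (Stmt.com skipc) S) skipc S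
  | loopStep (S : Stmt C) :
      CtrlStep skipc (Stmt.loop S) skipc
        (Stmt.choice (Stmt.com skipc) (Stmt.seq S (Stmt.loop S)))
  | choiceL (S₁ S₂ : Stmt C) : CtrlStep skipc (Stmt.choice S₁ S₂) skipc S₁
  | choiceR (S₁ S₂ : Stmt C) : CtrlStep skipc (Stmt.choice S₁ S₂) skipc S₂
  | seqStep {S₁ : Stmt C} {c : C} {S₁' : Stmt C} (S₂ : Stmt C) :
      CtrlStep skipc S₁ c S₁' → CtrlStep skipc (Stmt.seq S₁ S₂) c (Stmt.seq S₁' S₂)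

/-- The state space `Σ`, a subset of the product of global and local states. -/
abbrev PSt {G L : Type} (S : Set (G × L)) : Type := { p : G × L // p ∈ S }

/-- Componentwise composition of states, defined only when both components are
defined and the result again lies in the state space `S`. -/
noncomputable def pOp {G L : Type} (A : SepAlg G) (B : SepAlg L) {S : Set (G × L)}
    (x y : PSt S) : Option (PSt S) :=
  match A.op x.1.1 y.1.1, B.op x.1.2 y.1.2 with
  | some g, some l => if h : (g, l) ∈ S then some ⟨(g, l), h⟩ else none
  | _, _ => none

/-- Separating conjunction of state predicates over the product state space. -/
noncomputable def pSep {G L : Type} (A : SepAlg G) (B : SepAlg L) {S : Set (G × L)}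
    (p q : Set (PSt S)) : Set (PSt S) :=
  { s | ∃ a ∈ p, ∃ b ∈ q, pOp A B a b = some s }

/-- Locality of a command semantics. -/
noncomputable def LocalSem {G L C : Type} (A : SepAlg G) (B : SepAlg L) {S : Set (G × L)}
    (sem : C → PSt S → Set (PSt S)) : Prop :=
  ∀ (c : C) (p q o : Set (PSt S)),
    postP (sem c) p ⊆ q → postP (sem c) (pSep A B p o) ⊆ pSep A B q o

/-- An interference `(o, c)` is effectful if it may change the global state. -/
def Effectful {G L C : Type} {S : Set (G × L)} (sem : C → PSt S → Set (PSt S))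
    (o : Set (PSt S)) (c : C) : Prop :=
  ∃ s ∈ o, ∃ t ∈ sem c s, t.1.1 ≠ s.1.1

/-- `inter(o, c)`: the recorded interference set of a command. -/
def interOf {G L C : Type} {S : Set (G × L)} (sem : C → PSt S → Set (PSt S))
    (o : Set (PSt S)) (c : C) : Set (Set (PSt S) × C) :=
  { x | Effectful sem o c ∧ x = (o, c) }

/-- `inter(o, c) ⊑ 𝕀`: either there is no interference to capture, or it is
covered by an interference in `𝕀`. -/
def InterCovered {G L C : Type} {S : Set (G × L)} (sem : C → PSt S → Set (PSt S))
    (o : Set (PSt S)) (c : C) (I : Set (Set (PSt S) × C)) : Prop :=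
  ¬ Effectful sem o c ∨ ∃ r : Set (PSt S), (r, c) ∈ I ∧ o ⊆ r

/-- Thread-local safety, by recursion on the step bound `k`. -/
def safe {G L C : Type} {S : Set (G × L)} (sem : C → PSt S → Set (PSt S)) (skipc : C)
    (P : Set (Set (PSt S))) (I : Set (Set (PSt S) × C)) :
    ℕ → Stmt C → Set (PSt S) → Set (PSt S) → Prop
  | 0, _, _, _ => True
  | k + 1, St, r, q =>
      (St = Stmt.com skipc → r ⊆ q) ∧
      ∀ (c : C) (S' : Stmt C), CtrlStep skipc St c S' →
        InterCovered sem r c I ∧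
        ∃ n ∈ P, postP (sem c) r ⊆ n ∧ safe sem skipc P I k S' n q


theorem skip_safe {G L C : Type} {S : Set (G × L)} (sem : C → PSt S → Set (PSt S))
    (skipc : C) (hskip : ∀ s : PSt S, sem skipc s = {s})
    (q : Set (PSt S)) (I : Set (Set (PSt S) × C)) (k : ℕ) :
    safe sem skipc {q} I k (Stmt.com skipc) q q := by
  induction k with
  | zero => trivial
  | succ k ih =>
    refine ⟨fun _ => subset_rfl, fun c' S' hs => ?_⟩
    cases hs
    constructor
    · left; rintro ⟨s, _, t, ht, hne⟩
      rw [hskip] at ht; exact hne (by cases ht; rfl)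
    · exact ⟨q, rfl, by rintro t ⟨s, hs, ht⟩; rw [hskip] at ht; cases ht; exact hs, ih⟩

/-- soundness of the atomic-command rule. -/
theorem stmt14 {G L C : Type} {S : Set (G × L)} (sem : C → PSt S → Set (PSt S))
    (skipc : C) (hskip : ∀ s : PSt S, sem skipc s = {s})
    (c : C) (p q : Set (PSt S)) (h : postP (sem c) p ⊆ q) (k : ℕ) :
    safe sem skipc {q} (interOf sem p c) k (Stmt.com c) p q := by
  cases k with
  | zero => trivial
  | succ k =>
    refine ⟨fun heq => ?_, fun c' S' hs => ?_⟩
    · injection heq with heq; subst heq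
      intro s hs
      exact h ⟨s, hs, by rw [hskip]; rfl⟩
    · cases hs
      refine ⟨?_, q, rfl, h, skip_safe sem skipc hskip q _ k⟩
      by_cases he : Effectful sem p c
      · exact Or.inr ⟨p, ⟨he, rfl⟩, subset_rfl⟩
      · exact Or.inl he
end

section
/- Soundness of the loop rule with respect to safety: if safe^k_{ℙ,𝕀}(S, p, p), then safe^k_{{p} ∪ ℙ, 𝕀}(S*, p, p). -/
open Classical

section Aux
variable {G L C : Type} {S : Set (G × L)} (sem : C → PSt S → Set (PSt S)) (skipc : C)

lemma safe_mono_k (P : Set (Set (PSt S))) (I : Set (Set (PSt S) × C)) :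
    ∀ (k m : ℕ), m ≤ k → ∀ (St : Stmt C) (r q : Set (PSt S)),
      safe sem skipc P I k St r q → safe sem skipc P I m St r q := by
  intro k
  induction k with
  | zero => intro m hm St r q h; cases Nat.le_zero.mp hm; exact trivial
  | succ k ih =>
    intro m hm St r q h
    cases m with
    | zero => trivial
    | succ m =>
      obtain ⟨h1, h2⟩ := h
      refine ⟨h1, fun c S' hs => ?_⟩
      obtain ⟨hic, n, hn, hpost, hsafe⟩ := h2 c S' hs
      exact ⟨hic, n, hn, hpost, ih m (Nat.succ_le_succ_iff.mp hm) _ _ _ hsafe⟩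

lemma safe_mono_P (P P' : Set (Set (PSt S))) (I : Set (Set (PSt S) × C))
    (hPP : P ⊆ P') :
    ∀ (k : ℕ) (St : Stmt C) (r q : Set (PSt S)),
      safe sem skipc P I k St r q → safe sem skipc P' I k St r q := by
  intro k
  induction k with
  | zero => intro _ _ _ _; trivial
  | succ k ih =>
    intro St r q ⟨h1, h2⟩
    refine ⟨h1, fun c S' hs => ?_⟩
    obtain ⟨hic, n, hn, hpost, hsafe⟩ := h2 c S' hs
    exact ⟨hic, n, hPP hn, hpost, ih _ _ _ hsafe⟩

lemma skip_not_effectful (hskip : ∀ s : PSt S, sem skipc s = {s})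
    (r : Set (PSt S)) : ¬ Effectful sem r skipc := by
  rintro ⟨s, _, t, ht, hne⟩
  rw [hskip] at ht
  exact hne (by rw [ht])

lemma postP_skip (hskip : ∀ s : PSt S, sem skipc s = {s})
    (r : Set (PSt S)) : postP (sem skipc) r = r := by
  ext t
  constructor
  · rintro ⟨s, hs, ht⟩; rw [hskip] at ht; rwa [ht]
  · intro ht; exact ⟨t, ht, by rw [hskip]; rfl⟩

lemma safe_skip (hskip : ∀ s : PSt S, sem skipc s = {s})
    (P : Set (Set (PSt S))) (I : Set (Set (PSt S) × C))
    (p : Set (PSt S)) (hp : p ∈ P) :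
    ∀ k, safe sem skipc P I k (Stmt.com skipc) p p := by
  intro k
  induction k with
  | zero => trivial
  | succ k ih =>
    refine ⟨fun _ => subset_rfl, fun c S' hs => ?_⟩
    cases hs
    refine ⟨Or.inl (skip_not_effectful sem skipc hskip p), p, hp, ?_, ih⟩
    rw [postP_skip sem skipc hskip]

end Aux

/-- soundness of the loop rule with respect to safety. -/
theorem stmt16 {G L C : Type} {S : Set (G × L)} (sem : C → PSt S → Set (PSt S))
    (skipc : C) (hskip : ∀ s : PSt S, sem skipc s = {s})
    (P : Set (Set (PSt S))) (I : Set (Set (PSt S) × C))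
    (k : ℕ) (St : Stmt C) (p : Set (PSt S))
    (h : safe sem skipc P I k St p p) :
    safe sem skipc ({p} ∪ P) I k (Stmt.loop St) p p := by

  have hP' : P ⊆ {p} ∪ P := Set.subset_union_right
  have hp : p ∈ ({p} ∪ P : Set (Set (PSt S))) := Or.inl rfl
  -- joint claim by strong induction
  have key : ∀ j, j ≤ k →
      (safe sem skipc ({p} ∪ P) I j (Stmt.loop St) p p ∧
       ∀ (St' : Stmt C) (n : Set (PSt S)),
         safe sem skipc ({p} ∪ P) I j St' n p →
         safe sem skipc ({p} ∪ P) I j (Stmt.seq St' (Stmt.loop St)) n p) := by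
    intro j
    induction j using Nat.strong_induction_on with
    | _ j ih =>
      intro hjk
      constructor
      · -- loop part
        cases j with
        | zero => trivial
        | succ m =>
          refine ⟨fun hc => (by cases hc), fun c S' hs => ?_⟩
          cases hs
          refine ⟨Or.inl (skip_not_effectful sem skipc hskip p), p, hp,
            by rw [postP_skip sem skipc hskip], ?_⟩
          -- safe m (choice skip (seq St loop)) p p
          cases m with
          | zero => trivial
          | succ m' =>
            refine ⟨fun hc => (by cases hc), fun c S' hs => ?_⟩
            cases hs with
            | choiceL =>
              refine ⟨Or.inl (skip_not_effectful sem skipc hskip p), p, hp,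
                by rw [postP_skip sem skipc hskip], ?_⟩
              exact safe_skip sem skipc hskip _ I p hp m'
            | choiceR =>
              refine ⟨Or.inl (skip_not_effectful sem skipc hskip p), p, hp,
                by rw [postP_skip sem skipc hskip], ?_⟩
              have hm' : m' ≤ k := by omega
              have hSt : safe sem skipc ({p} ∪ P) I m' St p p :=
                safe_mono_P sem skipc P _ I hP' m' St p p
                  (safe_mono_k sem skipc P I k m' hm' St p p h)
              exact (ih m' (by omega) hm').2 St p hSt
      · -- seq part
        intro St' n hsafe
        cases j with
        | zero => trivial
        | succ m =>
          refine ⟨fun hc => (by cases hc), fun c S' hs => ?_⟩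
          cases hs with
          | seqSkip =>
            have hn : n ⊆ p := hsafe.1 rfl
            refine ⟨Or.inl (skip_not_effectful sem skipc hskip n), p, hp, ?_, ?_⟩
            · rw [postP_skip sem skipc hskip]; exact hn
            · exact (ih m (by omega) (by omega)).1
          | seqStep _ hstep =>
            obtain ⟨hic, n', hn', hpost, hsafe'⟩ := hsafe.2 _ _ hstep
            exact ⟨hic, n', hn', hpost,
              (ih m (by omega) (by omega)).2 _ n' hsafe'⟩
  exact (key k le_rfl).1
end

section
/- Soundness of the frame rule with respect to safety: assume all command semantics are local. If safe^k_{ℙ,𝕀}(S, r, q), then safe^k_{ℙ*o, 𝕀*o}(S, r*o, q*o) for every predicate o ⊆ Σ, where ℙ*o := { n*o | n ∈ ℙ } and 𝕀*o := { (r'*o, c) | (r', c) ∈ 𝕀 }. -/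
open Classical

lemma pOp_fst {G L : Type} (A : SepAlg G) (B : SepAlg L) {S : Set (G × L)}
    {a b s : PSt S} (h : pOp A B a b = some s) :
    A.op a.1.1 b.1.1 = some s.1.1 := by
  unfold pOp at h
  split at h
  next g l hg hl =>
    split at h
    · injection h with h'
      subst h'
      exact hg
    · exact absurd h (by simp)
  next => exact absurd h (by simp)

lemma pSep_mono {G L : Type} (A : SepAlg G) (B : SepAlg L) {S : Set (G × L)}
    {p q : Set (PSt S)} (o : Set (PSt S)) (h : p ⊆ q) :
    pSep A B p o ⊆ pSep A B q o := by
  rintro s ⟨a, ha, b, hb, hab⟩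
  exact ⟨a, h ha, b, hb, hab⟩

/-- soundness of the frame rule with respect to safety,
assuming all command semantics are local. -/
theorem stmt17 {G L C : Type} (A : SepAlg G) (B : SepAlg L) {S : Set (G × L)}
    (hemp : ∀ g ∈ A.emp, ∀ l ∈ B.emp, (g, l) ∈ S)
    (hdec : ∀ (g₁ g₂ : G) (l₁ l₂ : L) (g : G) (l : L),
      A.op g₁ g₂ = some g → B.op l₁ l₂ = some l → (g, l) ∈ S → (g₁, l₁) ∈ S)
    (sem : C → PSt S → Set (PSt S)) (skipc : C)
    (hskip : ∀ s : PSt S, sem skipc s = {s})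
    (hloc : LocalSem A B sem)
    (P : Set (Set (PSt S))) (I : Set (Set (PSt S) × C))
    (k : ℕ) (St : Stmt C) (r q o : Set (PSt S))
    (h : safe sem skipc P I k St r q) :
    safe sem skipc ((fun n => pSep A B n o) '' P)
      ((fun x => (pSep A B x.1 o, x.2)) '' I) k St (pSep A B r o) (pSep A B q o) := by
  induction k generalizing St r with
  | zero => trivial
  | succ k ih =>
    obtain ⟨h1, h2⟩ := h
    refine ⟨fun hS => pSep_mono A B o (h1 hS), fun c S' hstep => ?_⟩
    obtain ⟨hcov, n, hnP, hpost, hsafe⟩ := h2 c S' hstep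
    refine ⟨?_, pSep A B n o, ⟨n, hnP, rfl⟩, hloc c r n o hpost, ih _ _ hsafe⟩
    cases hcov with
    | inl hne =>
      left
      rintro ⟨s, ⟨a, ha, b, hb, hab⟩, t, ht, hgt⟩
      have hmem : t ∈ pSep A B (postP (sem c) {a}) {b} := by
        apply hloc c {a} (postP (sem c) {a}) {b} (Set.Subset.refl _)
        exact ⟨s, ⟨a, rfl, b, rfl, hab⟩, ht⟩
      obtain ⟨t₁, ⟨a', ha', ht₁⟩, b', hb', htab⟩ := hmem
      rcases ha' with rfl
      rcases hb' with rfl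
      unfold Effectful at hne
      push_neg at hne
      have hg1 : t₁.1.1 = a'.1.1 := hne a' ha t₁ ht₁
      have e1 := pOp_fst A B htab
      have e2 := pOp_fst A B hab
      rw [hg1, e2] at e1
      injection e1 with e1
      exact hgt e1.symm
    | inr hcov =>
      obtain ⟨r', hr'I, hrr'⟩ := hcov
      exact Or.inr ⟨pSep A B r' o, ⟨(r', c), hr'I, rfl⟩, pSep_mono A B o hrr'⟩
end
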